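/- Let λ₁, λ₂, μ₁, μ₂, θ_s, θ_d > 0, γ_d = μ₂/(μ₁+μ₂). Define π^R_{m,n} = P^R_{m+n}·S^R_m with P^R_n = ∏_{i=1}^{n} (μ₁+μ₂)/(λ₁+λ₂+i·θ_d) and S^R_m = ∏_{i=1}^{m} ((λ₂+λ₁·[i>1]+(i-1)θ_d)(1-γ_d))/(λ₁+i·θ_d), and q_{1,j} = (λ₂/(μ₂+θ_s))·∏_{k=1}^{j} μ₁/(λ₁+k·θ_d). Then for all j ≥ 2, q_{1,j}·(θ_s+j·θ_d+μ₁+μ₂+λ₁+λ₂) = q_{2,j}·(2θ_s+μ₂) + q_{1,j+1}·((j+1)θ_d+λ₁) + q_{1,j-1}·μ₁ + ∑_{k=0}^{j} π^R_{j-k,k}·λ₂·(1-γ_d)^k, where q_{2,j} = (λ₂/(μ₂+θ_s))·(λ₂/(μ₂+2θ_s))·∏_{k=1}^{j} μ₁/(λ₁+k·θ_d). -/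

import Mathlib

theorem stmt_16 (l1 l2 m1 m2 θs θd : ℝ) (hl1 : 0 < l1) (hl2 : 0 < l2) (hm1 : 0 < m1)
    (hm2 : 0 < m2) (hθs : 0 < θs) (hθd : 0 < θd)
    (γd : ℝ) (hγd : γd = m2 / (m1 + m2))
    (P S : ℕ → ℝ)
    (hP : ∀ n : ℕ, P n = ∏ i ∈ Finset.Icc 1 n, (m1 + m2) / (l1 + l2 + (i : ℝ) * θd))
    (hS : ∀ m : ℕ, S m = ∏ i ∈ Finset.Icc 1 m,
      ((l2 + (if 1 < i then l1 else 0) + ((i : ℝ) - 1) * θd) * (1 - γd)) /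
        (l1 + (i : ℝ) * θd))
    (πR : ℕ → ℕ → ℝ) (hπR : ∀ m n : ℕ, πR m n = P (m + n) * S m)
    (q1 q2 : ℕ → ℝ)
    (hq1 : ∀ j : ℕ, q1 j =
      (l2 / (m2 + θs)) * ∏ k ∈ Finset.Icc 1 j, m1 / (l1 + (k : ℝ) * θd))
    (hq2 : ∀ j : ℕ, q2 j =
      (l2 / (m2 + θs)) * (l2 / (m2 + 2 * θs)) *
        ∏ k ∈ Finset.Icc 1 j, m1 / (l1 + (k : ℝ) * θd)) :
    ∀ j : ℕ, 2 ≤ j →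
      q1 j * (θs + (j : ℝ) * θd + m1 + m2 + l1 + l2) =
        q2 j * (2 * θs + m2) + q1 (j + 1) * (((j : ℝ) + 1) * θd + l1) +
          q1 (j - 1) * m1 +
          ∑ k ∈ Finset.range (j + 1), πR (j - k) k * l2 * (1 - γd) ^ k := by
  intro j hj
  have hm12 : (0:ℝ) < m1 + m2 := by linarith
  have hd : ∀ k : ℕ, (0:ℝ) < l1 + (k:ℝ) * θd := fun k => by positivity
  have hγ : (1 - γd) * (m1 + m2) = m1 := by
    rw [hγd]; field_simp; ring
  set T : ℕ → ℝ := fun n => ∑ m ∈ Finset.range (n+1), S m * (1-γd)^(n-m) with hT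
  set A : ℕ → ℝ := fun n => ∏ k ∈ Finset.Icc 1 n, m1 / (l1 + (k:ℝ) * θd) with hA
  have hTrec : ∀ n : ℕ, T (n+1) = (1-γd) * T n + S (n+1) := by
    intro n
    simp only [hT]
    rw [Finset.sum_range_succ]
    congr 1
    · rw [Finset.mul_sum]
      refine Finset.sum_congr rfl fun m hm => ?_
      have hmn : m ≤ n := Nat.lt_succ_iff.mp (Finset.mem_range.mp hm)
      have : n + 1 - m = (n - m) + 1 := by omega
      rw [this, pow_succ]; ring
    · simp
  have hArec : ∀ n : ℕ, A (n+1) * (l1 + ((n:ℝ)+1) * θd) = A n * m1 := by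
    intro n
    simp only [hA]
    rw [Finset.prod_Icc_succ_top (Nat.le_add_left 1 n)]
    have hdn := (hd (n+1)).ne'
    push_cast at hdn ⊢
    field_simp
    simp only [mul_comm θd]
    try ring
  have hSrec : ∀ n : ℕ, S (n+1) * (l1 + ((n:ℝ)+1) * θd) =
      S n * ((l2 + (if 1 ≤ n then l1 else 0) + (n:ℝ) * θd) * (1-γd)) := by
    intro n
    rw [hS (n+1), Finset.prod_Icc_succ_top (Nat.le_add_left 1 n), ← hS n]
    have hdn := (hd (n+1)).ne'
    have hif : (if 1 < n + 1 then l1 else 0) = (if 1 ≤ n then l1 else 0) := by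
      simp only [Nat.lt_succ_iff]
    push_cast at hdn ⊢
    rw [hif]
    field_simp
    try ring
  have key : ∀ n : ℕ,
      S n * (l2 + (if 1 ≤ n then l1 else 0) + (n:ℝ) * θd) = l2 * T n ∧
      P n * T n = A n := by
    intro n
    induction n with
    | zero =>
      have hS0 : S 0 = 1 := by simp [hS 0]
      have hT0 : T 0 = 1 := by simp [hT, hS0]
      have hP0 : P 0 = 1 := by simp [hP 0]
      have hA0 : A 0 = 1 := by simp [hA]
      simp [hS0, hT0, hP0, hA0]
    | succ n ih =>
      obtain ⟨ih1, ih2⟩ := ih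
      have hdn := (hd (n+1))
      have hdn' : (l1 + ((n:ℝ)+1) * θd) ≠ 0 := by push_cast at hdn; linarith
      have hS1 : S (n+1) * (l1 + ((n:ℝ)+1) * θd) = (1-γd) * (l2 * T n) := by
        rw [hSrec n, ← ih1]; ring
      have hT1 : T (n+1) = (1-γd) * T n + S (n+1) := hTrec n
      constructor
      · have hif : (if 1 ≤ n + 1 then l1 else 0) = l1 := by simp
        rw [hif, hT1]
        have : S (n+1) * (l2 + l1 + ((n:ℝ)+1) * θd)
            = S (n+1) * l2 + S (n+1) * (l1 + ((n:ℝ)+1) * θd) := by ring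
        push_cast
        rw [this, hS1]
        try ring
      · have hPrec : P (n+1) * (l1 + l2 + ((n:ℝ)+1) * θd) = P n * (m1 + m2) := by
          rw [hP (n+1), Finset.prod_Icc_succ_top (Nat.le_add_left 1 n), ← hP n]
          have hD : l1 + l2 + ((n:ℝ)+1) * θd ≠ 0 := by positivity
          push_cast at hD ⊢
          field_simp
          try ring
        have hAr := hArec n
        -- Goal: P (n+1) * T (n+1) = A (n+1)
        have hD : l1 + l2 + ((n:ℝ)+1) * θd ≠ 0 := by positivity
        -- multiply both sides by (l1+(n+1)θd) * (l1+l2+(n+1)θd)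
        have hmain : P (n+1) * T (n+1) * ((l1 + ((n:ℝ)+1) * θd) * (l1 + l2 + ((n:ℝ)+1) * θd))
            = A (n+1) * ((l1 + ((n:ℝ)+1) * θd) * (l1 + l2 + ((n:ℝ)+1) * θd)) := by
          rw [hT1]
          have e1 : P (n+1) * ((1-γd) * T n + S (n+1)) *
              ((l1 + ((n:ℝ)+1) * θd) * (l1 + l2 + ((n:ℝ)+1) * θd))
              = (P (n+1) * (l1 + l2 + ((n:ℝ)+1) * θd)) *
                ((1-γd) * T n * (l1 + ((n:ℝ)+1) * θd) + S (n+1) * (l1 + ((n:ℝ)+1) * θd)) := by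
            ring
          rw [e1, hPrec, hS1]
          have e2 : A (n+1) * ((l1 + ((n:ℝ)+1) * θd) * (l1 + l2 + ((n:ℝ)+1) * θd))
              = (A (n+1) * (l1 + ((n:ℝ)+1) * θd)) * (l1 + l2 + ((n:ℝ)+1) * θd) := by ring
          rw [e2, hAr, ← ih2]
          linear_combination (P n * T n * (l1 + l2 + ((n:ℝ)+1) * θd)) * hγ
        have hne : (l1 + ((n:ℝ)+1) * θd) * (l1 + l2 + ((n:ℝ)+1) * θd) ≠ 0 :=
          mul_ne_zero hdn' hD
        exact mul_right_cancel₀ hne hmain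
  -- rewrite the sum
  have hsum : ∑ k ∈ Finset.range (j + 1), πR (j - k) k * l2 * (1 - γd) ^ k
      = l2 * A j := by
    have step1 : ∑ k ∈ Finset.range (j + 1), πR (j - k) k * l2 * (1 - γd) ^ k
        = l2 * P j * ∑ k ∈ Finset.range (j + 1),
            (fun m => S m * (1-γd)^(j-m)) ((j+1) - 1 - k) := by
      rw [Finset.mul_sum]
      refine Finset.sum_congr rfl fun k hk => ?_
      have hkj : k ≤ j := Nat.lt_succ_iff.mp (Finset.mem_range.mp hk)
      have h1 : j - k + k = j := by omega
      have h2 : j - (j - k) = k := by omega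
      simp only [hπR, h1]
      have h3 : (j+1) - 1 - k = j - k := by omega
      rw [h3, h2]
      ring
    have hrefl : ∑ k ∈ Finset.range (j + 1),
        (fun m => S m * (1-γd)^(j-m)) ((j+1) - 1 - k) = T j := by
      rw [Finset.sum_range_reflect (fun m => S m * (1-γd)^(j-m)) (j+1)]
      try simp [hT]
    rw [step1, hrefl]
    rw [show l2 * P j * T j = l2 * (P j * T j) by ring, (key j).2]
  -- now the final algebra
  have hms : m2 + θs ≠ 0 := by positivity
  have hms2 : m2 + 2*θs ≠ 0 := by positivity
  set c : ℝ := l2 / (m2 + θs) with hc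
  have f1 : q1 j = c * A j := hq1 j
  have f2 : q1 (j + 1) * (((j : ℝ) + 1) * θd + l1) = c * A j * m1 := by
    rw [hq1 (j+1)]
    have := hArec j
    simp only [hA] at this ⊢
    push_cast at this ⊢
    calc c * (∏ k ∈ Finset.Icc 1 (j+1), m1 / (l1 + (k:ℝ) * θd)) * (((j : ℝ) + 1) * θd + l1)
        = c * ((∏ k ∈ Finset.Icc 1 (j+1), m1 / (l1 + (k:ℝ) * θd)) * (l1 + ((j:ℝ)+1) * θd)) := by
          push_cast; try ring
      _ = c * ((∏ k ∈ Finset.Icc 1 j, m1 / (l1 + (k:ℝ) * θd)) * m1) := by rw [this]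
      _ = c * (∏ k ∈ Finset.Icc 1 j, m1 / (l1 + (k:ℝ) * θd)) * m1 := by ring
  have f3 : q1 (j - 1) * m1 = c * A j * (l1 + (j:ℝ) * θd) := by
    rw [hq1 (j-1)]
    have hj1 : j - 1 + 1 = j := by omega
    have := hArec (j-1)
    rw [hj1] at this
    have hcast : ((j-1 : ℕ) : ℝ) + 1 = (j : ℝ) := by
      have : (1:ℕ) ≤ j := by omega
      push_cast [this]; ring
    rw [hcast] at this
    simp only [hA] at this
    calc c * (∏ k ∈ Finset.Icc 1 (j-1), m1 / (l1 + (k:ℝ) * θd)) * m1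
        = c * ((∏ k ∈ Finset.Icc 1 (j-1), m1 / (l1 + (k:ℝ) * θd)) * m1) := by ring
      _ = c * ((∏ k ∈ Finset.Icc 1 j, m1 / (l1 + (k:ℝ) * θd)) * (l1 + (j:ℝ) * θd)) := by
          rw [← this]
      _ = c * A j * (l1 + (j:ℝ) * θd) := by simp only [hA]; ring
  have f4 : q2 j * (2 * θs + m2) = c * A j * l2 := by
    rw [hq2 j]
    simp only [hA, ← hc]
    field_simp
    simp only [mul_comm θd]
    try ring
  have f5 : l2 * A j = c * A j * (m2 + θs) := by
    rw [hc]; field_simp; try ring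
  rw [hsum, f1, f2, f3, f4, f5]
  ring
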